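/- arXiv:1903.11867 — 4 statements merged into one kernel-verified Lean document; each statement's English description precedes it below -/
import Mathlib

section
/- Let α > 0, C, C₁, C₂ > 0, and let Z ≥ 0 be a random variable with P(0 < Z ≤ t) ≤ C t^α for all t > 0. Let W be a nonnegative random variable (possibly dependent on Z) such that for every t > 0, P(W ≥ t | Z) ≤ C₁ exp(−C₂ a t²) almost surely, where a > 0. Then E[Z · 1{Z ≤ W}] ≤ C̃ a^{−(1+α)/2} for a constant C̃ depending only on α, C, C₁, C₂. (Peeling argument: split on the events {2^{p−1}δ < Z ≤ 2^p δ} with δ = a^{−1/2}.) -/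
open MeasureTheory Filter

lemma sumg_summable (α C₂ : ℝ) (hα : 0 < α) (hC₂ : 0 < C₂) :
    Summable (fun q : ℕ => (2:ℝ) ^ (((q:ℝ)+1)*(1+α)) * Real.exp (-C₂ * 4^q)) := by
  set g : ℕ → ℝ := fun q => (2:ℝ) ^ (((q:ℝ)+1)*(1+α)) * Real.exp (-C₂ * 4^q) with hg
  have hgpos : ∀ q, 0 < g q := fun q => by
    have : (0:ℝ) < (2:ℝ) ^ (((q:ℝ)+1)*(1+α)) := Real.rpow_pos_of_pos (by norm_num) _
    positivity
  apply summable_of_ratio_norm_eventually_le (r := 1/2) (by norm_num)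
  have h4 : Tendsto (fun q : ℕ => (4:ℝ)^q) atTop atTop :=
    tendsto_pow_atTop_atTop_of_one_lt (by norm_num)
  have h4' : Tendsto (fun q : ℕ => (3*C₂) * (4:ℝ)^q) atTop atTop :=
    h4.const_mul_atTop (by positivity)
  have h1 : Tendsto (fun q : ℕ => Real.exp (-(3*C₂ * 4^q))) atTop (nhds 0) :=
    Real.tendsto_exp_atBot.comp (tendsto_neg_atBot_iff.mpr h4')
  have h2 : ∀ᶠ q : ℕ in atTop, Real.exp (-(3*C₂*4^q)) < (2:ℝ)^(-(1+α)) / 2 := by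
    refine h1.eventually_lt_const ?_
    have : (0:ℝ) < (2:ℝ)^(-(1+α)) := Real.rpow_pos_of_pos (by norm_num) _
    positivity
  filter_upwards [h2] with q hq
  rw [Real.norm_of_nonneg (hgpos _).le, Real.norm_of_nonneg (hgpos _).le]
  have key : g (q+1) = g q * ((2:ℝ)^(1+α) * Real.exp (-(3*C₂*4^q))) := by
    have e1 : (2:ℝ) ^ ((((q+1:ℕ):ℝ)+1)*(1+α)) = (2:ℝ)^(((q:ℝ)+1)*(1+α)) * (2:ℝ)^(1+α) := by
      rw [← Real.rpow_add (by norm_num : (0:ℝ) < 2)]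
      congr 1
      push_cast
      ring
    have e2 : Real.exp (-C₂ * 4^(q+1)) = Real.exp (-C₂*4^q) * Real.exp (-(3*C₂*4^q)) := by
      rw [← Real.exp_add]
      congr 1
      rw [pow_succ]
      ring
    simp only [hg]
    rw [e1, e2]
    ring
  rw [key]
  have h2pos : (0:ℝ) < (2:ℝ)^(1+α) := Real.rpow_pos_of_pos (by norm_num) _
  have hcancel : (2:ℝ)^(1+α) * ((2:ℝ)^(-(1+α)) / 2) = 1/2 := by
    rw [← mul_div_assoc, ← Real.rpow_add (by norm_num : (0:ℝ) < 2)]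
    rw [show (1+α)+-(1+α) = (0:ℝ) by ring, Real.rpow_zero]
  calc g q * ((2:ℝ)^(1+α) * Real.exp (-(3*C₂*4^q)))
      ≤ g q * ((2:ℝ)^(1+α) * ((2:ℝ)^(-(1+α)) / 2)) := by
        apply mul_le_mul_of_nonneg_left _ (hgpos q).le
        exact mul_le_mul_of_nonneg_left hq.le h2pos.le
    _ = 1/2 * g q := by rw [hcancel]; ring

/-- the peeling lemma. The conditional bound `P(W ≥ t | Z) ≤ C₁ exp(−C₂ a t²)`
a.s. is encoded by the equivalent statement over all Borel sets `B` in the range of `Z`. -/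
theorem stmt6 :
    ∀ (α C C₁ C₂ : ℝ), 0 < α → 0 < C → 0 < C₁ → 0 < C₂ →
    ∃ Ct : ℝ, 0 < Ct ∧
      ∀ (Ω : Type) (_ : MeasurableSpace Ω) (μ : Measure Ω), IsProbabilityMeasure μ →
      ∀ (Z W : Ω → ℝ) (a : ℝ), 0 < a →
      Measurable Z → Measurable W →
      (∀ ω, 0 ≤ Z ω) → (∀ ω, 0 ≤ W ω) →
      -- P(0 < Z ≤ t) ≤ C t^α
      (∀ t : ℝ, 0 < t → (μ {ω | 0 < Z ω ∧ Z ω ≤ t}).toReal ≤ C * t ^ α) →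
      -- P(W ≥ t | Z) ≤ C₁ exp(−C₂ a t²) a.s.
      (∀ t : ℝ, 0 < t → ∀ B : Set ℝ, MeasurableSet B →
        (μ {ω | t ≤ W ω ∧ Z ω ∈ B}).toReal
          ≤ C₁ * Real.exp (-C₂ * a * t ^ 2) * (μ {ω | Z ω ∈ B}).toReal) →
      ∫ ω, Z ω * (if Z ω ≤ W ω then 1 else 0) ∂μ ≤ Ct * a ^ (-(1 + α) / 2) := by
  intro α C C₁ C₂ hα hC hC₁ hC₂
  classical
  set g : ℕ → ℝ := fun q => (2:ℝ) ^ (((q:ℝ)+1)*(1+α)) * Real.exp (-C₂ * 4^q) with hgdef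
  have hgsum : Summable g := sumg_summable α C₂ hα hC₂
  have hgpos : ∀ q, 0 < g q := fun q => by
    have : (0:ℝ) < (2:ℝ) ^ (((q:ℝ)+1)*(1+α)) := Real.rpow_pos_of_pos (by norm_num) _
    positivity
  set T : ℝ := ∑' q, g q with hTdef
  have hT0 : 0 ≤ T := tsum_nonneg fun q => (hgpos q).le
  refine ⟨C * (1 + C₁ * T), by positivity, ?_⟩
  intro Ω mΩ μ hμ Z W a ha hZm hWm hZ0 hW0 hmargin hcond
  set δ : ℝ := a ^ (-(1:ℝ)/2) with hδdef
  have hδ : 0 < δ := Real.rpow_pos_of_pos ha _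
  have haδ : a * δ ^ 2 = 1 := by
    rw [hδdef, ← Real.rpow_natCast (a ^ (-(1:ℝ)/2)) 2, ← Real.rpow_mul ha.le]
    norm_num
    rw [Real.rpow_neg_one]
    exact mul_inv_cancel₀ ha.ne'
  have hδr : δ ^ (1+α) = a ^ (-(1+α)/2) := by
    rw [hδdef, ← Real.rpow_mul ha.le]
    congr 1
    ring
  have hδrpos : 0 < δ ^ (1+α) := Real.rpow_pos_of_pos hδ _
  set S₀ : Set Ω := {ω | 0 < Z ω ∧ Z ω ≤ δ} with hS₀def
  set Tq : ℕ → Set Ω := fun q =>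
    {ω | 2^q*δ ≤ W ω ∧ Z ω ∈ Set.Ioc (2^q*δ) (2^(q+1)*δ)} with hTqdef
  have hS₀m : MeasurableSet S₀ := hZm measurableSet_Ioc
  have hTqm : ∀ q, MeasurableSet (Tq q) := fun q =>
    (hWm measurableSet_Ici).inter (hZm measurableSet_Ioc)
  -- pointwise bound
  have hpoint : ∀ ω, ENNReal.ofReal (Z ω * (if Z ω ≤ W ω then 1 else 0)) ≤
      S₀.indicator (fun _ => ENNReal.ofReal δ) ω
      + ∑' q, (Tq q).indicator (fun _ => ENNReal.ofReal (2^(q+1)*δ)) ω := by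
    intro ω
    by_cases hzw : Z ω ≤ W ω
    swap
    · simp [hzw]
    rcases eq_or_lt_of_le (hZ0 ω) with hz0 | hz0
    · simp [← hz0]
    have hex : ∃ q : ℕ, Z ω ≤ 2^q * δ := by
      obtain ⟨q, hq⟩ := pow_unbounded_of_one_lt (Z ω / δ) (one_lt_two (α := ℝ))
      refine ⟨q, ?_⟩
      rw [div_lt_iff₀ hδ] at hq
      linarith
    have hn1 : Z ω ≤ 2^(Nat.find hex) * δ := Nat.find_spec hex
    rcases Nat.eq_zero_or_pos (Nat.find hex) with h0 | hpos
    · have hmem : ω ∈ S₀ := by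
        refine ⟨hz0, ?_⟩
        rw [h0] at hn1
        simpa using hn1
      rw [Set.indicator_of_mem hmem]
      refine le_trans ?_ le_self_add
      apply ENNReal.ofReal_le_ofReal
      rw [if_pos hzw, mul_one]
      rw [h0] at hn1
      simpa using hn1
    · obtain ⟨q, hq⟩ : ∃ q, Nat.find hex = q + 1 :=
        ⟨Nat.find hex - 1, (Nat.succ_pred_eq_of_pos hpos).symm⟩
      have hlt : 2^q * δ < Z ω := by
        have h := Nat.find_min hex (m := q) (by omega)
        push_neg at h
        exact h
      have hn1' : Z ω ≤ 2^(q+1) * δ := by rw [hq] at hn1; exact hn1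
      have hmem : ω ∈ Tq q := ⟨le_trans hlt.le hzw, hlt, hn1'⟩
      calc ENNReal.ofReal (Z ω * (if Z ω ≤ W ω then 1 else 0))
          ≤ ENNReal.ofReal (2^(q+1)*δ) := by
            apply ENNReal.ofReal_le_ofReal
            rw [if_pos hzw, mul_one]
            exact hn1'
        _ = (Tq q).indicator (fun _ => ENNReal.ofReal (2^(q+1)*δ)) ω :=
            (Set.indicator_of_mem hmem (fun _ => ENNReal.ofReal (2^(q+1)*δ))).symm
        _ ≤ ∑' q', (Tq q').indicator (fun _ => ENNReal.ofReal (2^(q'+1)*δ)) ω :=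
            ENNReal.le_tsum q
        _ ≤ _ := le_add_self
  -- measure bounds
  have hS₀b : μ S₀ ≤ ENNReal.ofReal (C * δ ^ α) := by
    rw [← ENNReal.ofReal_toReal (measure_ne_top μ S₀)]
    exact ENNReal.ofReal_le_ofReal (hmargin δ hδ)
  have hTqb : ∀ q, μ (Tq q) ≤
      ENNReal.ofReal (C₁ * Real.exp (-C₂ * 4^q) * (C * ((2^(q+1)*δ) ^ α))) := by
    intro q
    have ht : (0:ℝ) < 2^q * δ := by positivity
    have hu : (0:ℝ) < 2^(q+1) * δ := by positivity
    have h1 := hcond (2^q*δ) ht (Set.Ioc (2^q*δ) (2^(q+1)*δ)) measurableSet_Ioc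
    have hexp : -C₂ * a * (2^q*δ)^2 = -C₂ * 4^q := by
      have h4 : ((2:ℝ)^q)^2 = 4^q := by
        rw [← pow_mul, show (4:ℝ) = 2^2 by norm_num, ← pow_mul]
        ring_nf
      have : a * (2^q*δ)^2 = 4^q := by
        rw [mul_pow, h4]
        calc a * (4^q * δ^2) = 4^q * (a * δ^2) := by ring
          _ = 4^q := by rw [haδ, mul_one]
      nlinarith [this]
    rw [hexp] at h1
    have h2 : (μ {ω | Z ω ∈ Set.Ioc (2^q*δ) (2^(q+1)*δ)}).toReal ≤ C * ((2^(q+1)*δ) ^ α) := by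
      refine le_trans ?_ (hmargin (2^(q+1)*δ) hu)
      refine ENNReal.toReal_mono (measure_ne_top μ _) ?_
      apply measure_mono
      intro ω hω
      exact ⟨lt_trans ht hω.1, hω.2⟩
    have h3 : (μ (Tq q)).toReal ≤ C₁ * Real.exp (-C₂ * 4^q) * (C * ((2^(q+1)*δ) ^ α)) := by
      refine le_trans h1 ?_
      apply mul_le_mul_of_nonneg_left h2
      positivity
    rw [← ENNReal.ofReal_toReal (measure_ne_top μ (Tq q))]
    exact ENNReal.ofReal_le_ofReal h3
  -- the per-term algebraic identity
  have hterm : ∀ q : ℕ, (2^(q+1)*δ) * (C₁ * Real.exp (-C₂ * 4^q) * (C * ((2^(q+1)*δ) ^ α)))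
      = C * C₁ * δ ^ (1+α) * g q := by
    intro q
    have hbase : (0:ℝ) ≤ (2:ℝ)^(q+1) := by positivity
    have e1 : ((2:ℝ)^(q+1)*δ) * ((2^(q+1)*δ) ^ α)
        = (2:ℝ) ^ (((q:ℝ)+1)*(1+α)) * δ ^ (1+α) := by
      have h2 : (2:ℝ)^((((q+1:ℕ)):ℝ)) * (2:ℝ)^((((q+1:ℕ)):ℝ)*α) = (2:ℝ)^(((q:ℝ)+1)*(1+α)) := by
        rw [← Real.rpow_add (by norm_num : (0:ℝ) < 2)]
        congr 1
        push_cast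
        ring
      rw [Real.mul_rpow hbase hδ.le, ← Real.rpow_natCast (2:ℝ) (q+1),
          ← Real.rpow_mul (by norm_num : (0:ℝ) ≤ 2), Real.rpow_add hδ, Real.rpow_one, ← h2]
      ring
    calc (2^(q+1)*δ) * (C₁ * Real.exp (-C₂ * 4^q) * (C * ((2^(q+1)*δ) ^ α)))
        = C * C₁ * (((2:ℝ)^(q+1)*δ) * ((2^(q+1)*δ) ^ α)) * Real.exp (-C₂ * 4^q) := by ring
      _ = C * C₁ * δ ^ (1+α) * g q := by rw [e1, hgdef]; ring
  -- lintegral bound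
  have hlin : ∫⁻ ω, ENNReal.ofReal (Z ω * (if Z ω ≤ W ω then 1 else 0)) ∂μ
      ≤ ENNReal.ofReal (C * (1 + C₁ * T) * (δ ^ (1+α))) := by
    calc ∫⁻ ω, ENNReal.ofReal (Z ω * (if Z ω ≤ W ω then 1 else 0)) ∂μ
        ≤ ∫⁻ ω, (S₀.indicator (fun _ => ENNReal.ofReal δ) ω
            + ∑' q, (Tq q).indicator (fun _ => ENNReal.ofReal (2^(q+1)*δ)) ω) ∂μ :=
          lintegral_mono hpoint
      _ = ENNReal.ofReal δ * μ S₀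
          + ∑' q, ENNReal.ofReal (2^(q+1)*δ) * μ (Tq q) := by
          rw [lintegral_add_left (measurable_const.indicator hS₀m)]
          rw [lintegral_indicator_const hS₀m]
          rw [lintegral_tsum (fun q => (measurable_const.indicator (hTqm q)).aemeasurable)]
          congr 1
          exact tsum_congr fun q => lintegral_indicator_const (hTqm q) _
      _ ≤ ENNReal.ofReal δ * ENNReal.ofReal (C * δ ^ α)
          + ∑' q, ENNReal.ofReal (2^(q+1)*δ)
              * ENNReal.ofReal (C₁ * Real.exp (-C₂ * 4^q) * (C * ((2^(q+1)*δ) ^ α))) := by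
          refine add_le_add (mul_le_mul_right hS₀b _) ?_
          exact ENNReal.tsum_le_tsum fun q => mul_le_mul_right (hTqb q) _
      _ = ENNReal.ofReal (C * δ ^ (1+α))
          + ∑' q, ENNReal.ofReal (C * C₁ * δ ^ (1+α) * g q) := by
          congr 1
          · rw [← ENNReal.ofReal_mul hδ.le]
            congr 1
            rw [Real.rpow_add hδ, Real.rpow_one]
            ring
          · refine tsum_congr fun q => ?_
            rw [← ENNReal.ofReal_mul (by positivity), hterm q]
      _ = ENNReal.ofReal (C * δ ^ (1+α)) + ENNReal.ofReal (C * C₁ * δ ^ (1+α) * T) := by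
          congr 1
          rw [← ENNReal.ofReal_tsum_of_nonneg (fun q => by positivity)
            (hgsum.mul_left (C * C₁ * δ ^ (1+α)))]
          congr 1
          exact tsum_mul_left
      _ = ENNReal.ofReal (C * (1 + C₁ * T) * (δ ^ (1+α))) := by
          rw [← ENNReal.ofReal_add (by positivity) (by positivity)]
          congr 1
          ring
  -- conclude
  have hfm : Measurable (fun ω => Z ω * (if Z ω ≤ W ω then 1 else 0) : Ω → ℝ) :=
    hZm.mul (Measurable.ite (measurableSet_le hZm hWm) measurable_const measurable_const)
  have hf0 : ∀ ω, 0 ≤ Z ω * (if Z ω ≤ W ω then 1 else 0) := fun ω =>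
    mul_nonneg (hZ0 ω) (by split <;> norm_num)
  rw [integral_eq_lintegral_of_nonneg_ae (ae_of_all μ hf0) hfm.aestronglyMeasurable]
  calc (∫⁻ ω, ENNReal.ofReal (Z ω * (if Z ω ≤ W ω then 1 else 0)) ∂μ).toReal
      ≤ (ENNReal.ofReal (C * (1 + C₁ * T) * (δ ^ (1+α)))).toReal :=
        ENNReal.toReal_mono ENNReal.ofReal_ne_top hlin
    _ = C * (1 + C₁ * T) * (δ ^ (1+α)) := ENNReal.toReal_ofReal (by positivity)
    _ = C * (1 + C₁ * T) * a ^ (-(1 + α) / 2) := by rw [hδr]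
end

section
/- Fix β ∈ [L] and x ∈ ℝ^D. Let F_β(x) = {g ∈ {0,1}^L : Σ_l g^l (1 − η^l(x)) ≤ β}. Define K(x) = max{m ∈ [L] : Σ_{l=1}^m (1 − η^{σ_l}(x)) ≤ β} (with σ sorting η(x) decreasingly), and let g* be the indicator of the top-K(x) indices. Then g* ∈ F_β(x), and for every g ∈ F_β(x), Σ_l η^l(x)·1{g^l = 0} ≥ Σ_l η^l(x)·1{g*^l = 0}. In particular the F_β-oracle classifier is the top-K(x) rule. -/
open Finset

lemma fin_le_strictMono {m L : ℕ} (f : Fin m → Fin L) (hf : StrictMono f) :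
    ∀ k : Fin m, (k : ℕ) ≤ (f k : ℕ) := by
  rintro ⟨k, hk⟩
  induction k with
  | zero => exact Nat.zero_le _
  | succ i ih =>
    have hi : i < m := Nat.lt_of_succ_lt hk
    have h1 : f ⟨i, hi⟩ < f ⟨i + 1, hk⟩ := hf (by simp [Fin.lt_def])
    exact Nat.succ_le_of_lt (lt_of_le_of_lt (ih hi) h1)

lemma top_sum {L : ℕ} (f : Fin L → ℝ) (hf : ∀ i j : Fin L, i ≤ j → f j ≤ f i)
    (S : Finset (Fin L)) :
    ∑ j ∈ S, f j ≤ ∑ j ∈ Finset.univ.filter (fun j : Fin L => (j : ℕ) < S.card), f j := by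
  set m := S.card with hm
  have hmL : m ≤ L := by simpa using S.card_le_univ
  have h1 : ∑ j ∈ S, f j = ∑ k : Fin m, f (S.orderEmbOfFin rfl k) := by
    rw [← Finset.sum_attach S f]
    refine Fintype.sum_equiv (S.orderIsoOfFin rfl).symm.toEquiv _ _ ?_
    intro x
    rw [RelIso.coe_fn_toEquiv, ← Finset.coe_orderIsoOfFin_apply, OrderIso.apply_symm_apply]
  have h2 : ∑ j ∈ Finset.univ.filter (fun j : Fin L => (j : ℕ) < m), f j
      = ∑ k : Fin m, f (Fin.castLE hmL k) := by
    symm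
    apply Finset.sum_bij (fun (k : Fin m) _ => Fin.castLE hmL k)
    · intro k _; simp [k.2]
    · intro a _ b _ h; exact Fin.castLE_injective hmL h
    · intro j hj
      simp only [Finset.mem_filter] at hj
      exact ⟨⟨(j : ℕ), hj.2⟩, Finset.mem_univ _, rfl⟩
    · intros; rfl
  rw [h1, h2]
  apply Finset.sum_le_sum
  intro k _
  apply hf
  rw [Fin.le_def]
  exact fin_le_strictMono _ (S.orderEmbOfFin rfl).strictMono k

/-- the F_β-oracle is the top-K(x) rule, where
`K(x) = max{m ∈ [L] : ∑_{l=1}^m (1 − η^{σ_l}(x)) ≤ β}`. -/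
theorem stmt7 (L β : ℕ) (hβ1 : 1 ≤ β) (hβL : β ≤ L)
    (η : Fin L → ℝ) (hη : ∀ l, 0 ≤ η l ∧ η l ≤ 1)
    (σ : Equiv.Perm (Fin L)) (hσ : ∀ i j : Fin L, i ≤ j → η (σ j) ≤ η (σ i))
    -- K is the largest m ≤ L with ∑_{j<m} (1 − η(σ_j)) ≤ β
    (K : ℕ) (hKL : K ≤ L)
    (hKfeas : ∑ j ∈ Finset.univ.filter (fun j : Fin L => (j : ℕ) < K), (1 - η (σ j)) ≤ (β : ℝ))
    (hKmax : ∀ m, m ≤ L →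
      (∑ j ∈ Finset.univ.filter (fun j : Fin L => (j : ℕ) < m), (1 - η (σ j))) ≤ (β : ℝ) → m ≤ K)
    -- g* is the indicator of the top-K indices
    (gstar : Fin L → Bool) (hgstar : ∀ l, gstar l = decide ((σ.symm l : ℕ) < K)) :
    (∑ l, (if gstar l = true then 1 - η l else 0)) ≤ (β : ℝ) ∧
    ∀ g : Fin L → Bool, (∑ l, (if g l = true then 1 - η l else 0)) ≤ (β : ℝ) →
      (∑ l, (if gstar l = false then η l else 0)) ≤ ∑ l, (if g l = false then η l else 0) := by
  -- the selected set of gstar, reindexed through σ, is filter (· < K)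
  have hstar_sum : ∀ F : Fin L → ℝ,
      (∑ l, (if gstar l = true then F l else 0))
        = ∑ j ∈ Finset.univ.filter (fun j : Fin L => (j : ℕ) < K), F (σ j) := by
    intro F
    rw [← Equiv.sum_comp σ (fun l => if gstar l = true then F l else 0), Finset.sum_filter]
    refine Finset.sum_congr rfl fun j _ => ?_
    rw [hgstar, Equiv.symm_apply_apply]
    by_cases h : (j : ℕ) < K <;> simp [h]
  have feas : (∑ l, (if gstar l = true then 1 - η l else 0)) ≤ (β : ℝ) := by
    rw [hstar_sum (fun l => 1 - η l)]; exact hKfeas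
  refine ⟨feas, ?_⟩
  intro g hg
  -- selected sets
  set S : Finset (Fin L) := Finset.univ.filter (fun l => g l = true) with hS
  -- sum split: FN = total - TP
  have split : ∀ h : Fin L → Bool,
      (∑ l, (if h l = false then η l else 0)) = (∑ l, η l) - ∑ l, (if h l = true then η l else 0) := by
    intro h
    rw [eq_sub_iff_add_eq, ← Finset.sum_add_distrib]
    refine Finset.sum_congr rfl fun l _ => ?_
    cases hl : h l <;> simp
  rw [split g, split gstar, sub_le_sub_iff_left]
  -- need: TP(g) ≤ TP(gstar)
  have hgS : (∑ l, (if g l = true then η l else 0)) = ∑ l ∈ S, η l := by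
    rw [Finset.sum_filter]
  have hgS' : (∑ l, (if g l = true then 1 - η l else 0)) = ∑ l ∈ S, (1 - η l) := by
    rw [Finset.sum_filter]
  -- reindex S through σ.symm
  set S' : Finset (Fin L) := S.image σ.symm with hS'
  have hcard : S'.card = S.card := Finset.card_image_of_injective _ σ.symm.injective
  have himg : ∀ F : Fin L → ℝ, ∑ j ∈ S', F (σ j) = ∑ l ∈ S, F l := by
    intro F
    rw [Finset.sum_image (fun a _ b _ h => σ.symm.injective h)]
    exact Finset.sum_congr rfl fun l _ => by rw [Equiv.apply_symm_apply]
  set m := S.card with hm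
  have hmL : m ≤ L := by simpa using S.card_le_univ
  -- top_sum for η ∘ σ on S'
  have htop : ∑ l ∈ S, η l ≤ ∑ j ∈ Finset.univ.filter (fun j : Fin L => (j : ℕ) < m), η (σ j) := by
    rw [← himg η]
    have := top_sum (fun j => η (σ j)) hσ S'
    rwa [hcard] at this
  -- m ≤ K
  have hmK : m ≤ K := by
    apply hKmax m hmL
    calc ∑ j ∈ Finset.univ.filter (fun j : Fin L => (j : ℕ) < m), (1 - η (σ j))
        = (m : ℝ) - ∑ j ∈ Finset.univ.filter (fun j : Fin L => (j : ℕ) < m), η (σ j) := by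
          rw [Finset.sum_sub_distrib, Finset.sum_const, nsmul_eq_mul, mul_one]
          congr 1
          have e : Finset.univ.filter (fun j : Fin L => (j : ℕ) < m)
              = (Finset.range m).attachFin
                  (fun x hx => lt_of_lt_of_le (Finset.mem_range.mp hx) hmL) := by
            ext j; simp
          rw [e, Finset.card_attachFin, Finset.card_range]
      _ ≤ (m : ℝ) - ∑ l ∈ S, η l := by linarith [htop]
      _ = ∑ l ∈ S, (1 - η l) := by
          rw [Finset.sum_sub_distrib, Finset.sum_const, nsmul_eq_mul, mul_one, hm]
      _ ≤ (β : ℝ) := by rw [← hgS']; exact hg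
  -- conclude
  rw [hgS, hstar_sum η]
  calc ∑ l ∈ S, η l ≤ ∑ j ∈ Finset.univ.filter (fun j : Fin L => (j : ℕ) < m), η (σ j) := htop
    _ ≤ ∑ j ∈ Finset.univ.filter (fun j : Fin L => (j : ℕ) < K), η (σ j) := by
        apply Finset.sum_le_sum_of_subset_of_nonneg
        · intro j hj
          simp only [Finset.mem_filter] at *
          exact ⟨hj.1, lt_of_lt_of_le hj.2 hmK⟩
        · intro j _ _; exact (hη (σ j)).1
end

section
/- Fix x, k, and suppose {σ̂_1,…,σ̂_{l'}} ⊆ {σ_1,…,σ_k} for some l' ≤ k, where σ sorts η(x) decreasingly. If K(x) = k, i.e. Σ_{j=1}^k (1 − η^{σ_j}(x)) ≤ β, and the plug-in rule rejects σ̂-rank l', i.e. Σ_{j=1}^{l'} (1 − η̂^{σ̂_j}(x)) > β, then l'·‖η(x) − η̂(x)‖_∞ ≥ |Σ_{j=k−l'+1}^{k} (1 − η^{σ_j}(x)) − β|. (The sum of the l' largest of (1−η^{σ_j}(x)) over j ≤ k dominates any sum of l' such terms indexed in the top-k set.) -/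
open Finset

private lemma card_filter_val_mem (L : ℕ) (s : Finset ℕ) (hs : ∀ m ∈ s, m < L) :
    (Finset.univ.filter fun j : Fin L => (j : ℕ) ∈ s).card = s.card := by
  refine Finset.card_bij (fun a _ => (a : ℕ)) ?_ ?_ ?_
  · intro a ha; exact (Finset.mem_filter.mp ha).2
  · intro a _ b _ h; exact Fin.val_injective h
  · intro b hb
    exact ⟨⟨b, hs b hb⟩, Finset.mem_filter.mpr ⟨Finset.mem_univ _, hb⟩, rfl⟩

/-- if `{σ̂_1,…,σ̂_{l'}} ⊆ {σ_1,…,σ_k}`, the budget is met at rank k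
(`∑_{j=1}^k (1−η^{σ_j}) ≤ β`) but the plug-in rule rejects σ̂-rank l'
(`∑_{j=1}^{l'} (1−η̂^{σ̂_j}) > β`), then
`l'·‖η−η̂‖_∞ ≥ |∑_{j=k−l'+1}^{k} (1−η^{σ_j}) − β|`. -/
theorem stmt12 (L β : ℕ) (hL : 0 < L) (hβ1 : 1 ≤ β) (hβL : β ≤ L)
    (η ηh : Fin L → ℝ)
    (hη : ∀ l, 0 ≤ η l ∧ η l ≤ 1) (hηh : ∀ l, 0 ≤ ηh l ∧ ηh l ≤ 1)
    (σ τ : Equiv.Perm (Fin L))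
    (hσ : ∀ i j : Fin L, i ≤ j → η (σ j) ≤ η (σ i))
    (hτ : ∀ i j : Fin L, i ≤ j → ηh (τ j) ≤ ηh (τ i))
    (k l' : ℕ) (hl'1 : 1 ≤ l') (hl'k : l' ≤ k) (hkL : k ≤ L)
    (hsub : Finset.image (fun j => τ j) (Finset.univ.filter fun j : Fin L => (j : ℕ) < l')
      ⊆ Finset.image (fun j => σ j) (Finset.univ.filter fun j : Fin L => (j : ℕ) < k))
    (hfeas : ∑ j ∈ Finset.univ.filter (fun j : Fin L => (j : ℕ) < k), (1 - η (σ j)) ≤ (β : ℝ))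
    (hrej : (β : ℝ) < ∑ j ∈ Finset.univ.filter (fun j : Fin L => (j : ℕ) < l'), (1 - ηh (τ j))) :
    |(∑ j ∈ Finset.univ.filter (fun j : Fin L => k - l' ≤ (j : ℕ) ∧ (j : ℕ) < k),
        (1 - η (σ j))) - (β : ℝ)|
      ≤ (l' : ℝ) * Finset.univ.sup' ⟨⟨0, hL⟩, Finset.mem_univ _⟩ (fun i => |η i - ηh i|) := by
  set M := Finset.univ.sup' ⟨⟨0, hL⟩, Finset.mem_univ _⟩ (fun i => |η i - ηh i|) with hM
  have hMle : ∀ i, |η i - ηh i| ≤ M := fun i => hM ▸ Finset.le_sup' (fun i => |η i - ηh i|) (Finset.mem_univ i)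
  set F : Fin L → ℝ := fun j => 1 - η (σ j) with hF
  have hFmono : ∀ i j : Fin L, i ≤ j → F i ≤ F j := fun i j hij => by
    simp only [hF]; linarith [hσ i j hij]
  have hF0 : ∀ j, 0 ≤ F j := fun j => by
    simp only [hF]; linarith [(hη (σ j)).2]
  set Sl : Finset (Fin L) := Finset.univ.filter (fun j : Fin L => (j : ℕ) < l') with hSl
  set A : Finset (Fin L) := Sl.image (fun j => σ.symm (τ j)) with hA
  set B : Finset (Fin L) :=
    Finset.univ.filter (fun j : Fin L => k - l' ≤ (j : ℕ) ∧ (j : ℕ) < k) with hB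
  -- cardinalities
  have hcardSl : Sl.card = l' := by
    have h1 : Sl = Finset.univ.filter (fun j : Fin L => (j : ℕ) ∈ Finset.range l') := by
      simp [hSl, Finset.mem_range]
    have h2 := card_filter_val_mem L (Finset.range l')
      (fun m hm => by have := Finset.mem_range.mp hm; omega)
    rw [h1, h2, Finset.card_range]
  have hcardA : A.card = l' := by
    rw [hA, Finset.card_image_of_injOn
      (fun a _ b _ h => τ.injective (σ.symm.injective h)), hcardSl]
  have hcardB : B.card = l' := by
    have h1 : B = Finset.univ.filter (fun j : Fin L => (j : ℕ) ∈ Finset.Ico (k - l') k) := by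
      simp [hB, Finset.mem_Ico]
    have h2 := card_filter_val_mem L (Finset.Ico (k - l') k)
      (fun m hm => by have := Finset.mem_Ico.mp hm; omega)
    rw [h1, h2, Nat.card_Ico]; omega
  -- A consists of indices < k
  have hAk : ∀ a ∈ A, (a : ℕ) < k := by
    intro a ha
    obtain ⟨j, hj, rfl⟩ := Finset.mem_image.mp ha
    have hmem : τ j ∈ Finset.image (fun j => σ j)
        (Finset.univ.filter fun j : Fin L => (j : ℕ) < k) :=
      hsub (Finset.mem_image.mpr ⟨j, hj, rfl⟩)
    obtain ⟨i, hi, hiτ⟩ := Finset.mem_image.mp hmem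
    have hei : σ.symm (τ j) = i := by rw [← hiτ]; simp
    rw [hei]
    exact (Finset.mem_filter.mp hi).2
  -- sum over A equals the plug-in-indexed true sum
  have hsumA : ∑ j ∈ A, F j = ∑ j ∈ Sl, (1 - η (τ j)) := by
    rw [hA, Finset.sum_image (fun a _ b _ h => τ.injective (σ.symm.injective h))]
    simp [hF]
  -- key comparison: ∑_A F ≤ ∑_B F
  have hAB : ∑ j ∈ A, F j ≤ ∑ j ∈ B, F j := by
    have hpLT : k - l' < L := by omega
    set p : Fin L := ⟨k - l', hpLT⟩ with hp
    have hC : ∀ c ∈ A \ B, F c ≤ F p := by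
      intro c hc
      obtain ⟨hcA, hcB⟩ := Finset.mem_sdiff.mp hc
      have h1 : (c : ℕ) < k := hAk c hcA
      have h2 : ¬(k - l' ≤ (c : ℕ) ∧ (c : ℕ) < k) := by
        intro h; exact hcB (Finset.mem_filter.mpr ⟨Finset.mem_univ _, h⟩)
      have h3 : (c : ℕ) ≤ k - l' := by omega
      exact hFmono c p h3
    have hD : ∀ d ∈ B \ A, F p ≤ F d := by
      intro d hd
      have hdB := (Finset.mem_sdiff.mp hd).1
      have h1 : k - l' ≤ (d : ℕ) := (Finset.mem_filter.mp hdB).2.1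
      exact hFmono p d h1
    have hcardCD : (A \ B).card = (B \ A).card := by
      have e1 := Finset.card_inter_add_card_sdiff A B
      have e2 := Finset.card_inter_add_card_sdiff B A
      rw [Finset.inter_comm] at e2
      omega
    have s1 : ∑ c ∈ A \ B, F c ≤ (A \ B).card • F p :=
      Finset.sum_le_card_nsmul _ _ _ hC
    have s2 : (B \ A).card • F p ≤ ∑ d ∈ B \ A, F d :=
      Finset.card_nsmul_le_sum _ _ _ hD
    have e3 : ∑ j ∈ A ∩ B, F j + ∑ j ∈ A \ B, F j = ∑ j ∈ A, F j :=
      Finset.sum_inter_add_sum_sdiff A B F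
    have e4 : ∑ j ∈ B ∩ A, F j + ∑ j ∈ B \ A, F j = ∑ j ∈ B, F j :=
      Finset.sum_inter_add_sum_sdiff B A F
    rw [Finset.inter_comm] at e4
    rw [hcardCD] at s1
    linarith
  -- plug-in sum vs true sum over Sl
  have hplug : ∑ j ∈ Sl, (1 - ηh (τ j)) ≤ ∑ j ∈ Sl, (1 - η (τ j)) + (l' : ℝ) * M := by
    have h1 : ∑ j ∈ Sl, (1 - ηh (τ j)) ≤ ∑ j ∈ Sl, ((1 - η (τ j)) + M) := by
      apply Finset.sum_le_sum
      intro j _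
      have := hMle (τ j)
      have habs : η (τ j) - ηh (τ j) ≤ |η (τ j) - ηh (τ j)| := le_abs_self _
      linarith
    rw [Finset.sum_add_distrib, Finset.sum_const, hcardSl, nsmul_eq_mul] at h1
    exact h1
  -- tail sum ≤ β
  have htail : ∑ j ∈ B, F j ≤ (β : ℝ) := by
    refine le_trans ?_ hfeas
    apply Finset.sum_le_sum_of_subset_of_nonneg
    · intro j hj
      exact Finset.mem_filter.mpr ⟨Finset.mem_univ _, (Finset.mem_filter.mp hj).2.2⟩
    · intro j _ _; exact hF0 j
  have hchain : (β : ℝ) < ∑ j ∈ B, F j + (l' : ℝ) * M := by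
    calc (β : ℝ) < ∑ j ∈ Sl, (1 - ηh (τ j)) := hrej
    _ ≤ ∑ j ∈ Sl, (1 - η (τ j)) + (l' : ℝ) * M := hplug
    _ = ∑ j ∈ A, F j + (l' : ℝ) * M := by rw [hsumA]
    _ ≤ ∑ j ∈ B, F j + (l' : ℝ) * M := by linarith
  have hgoal : (∑ j ∈ B, F j) - (β : ℝ) ≤ 0 := by linarith
  rw [abs_of_nonpos hgoal]
  linarith
end

section
/- Fix K, β ∈ [L] and x ∈ ℝ^D. Over the class F_β(x) ∩ {g ∈ {0,1}^L : ‖g‖₀ ≤ K}, the conditional false-negative risk Σ_l η^l(x)1{g^l=0} is minimized by the top-K⋆(x) rule, where K⋆(x) = min(K, max{m ∈ [L] : Σ_{l=1}^m (1 − η^{σ_l}(x)) ≤ β}). -/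
open Finset

lemma key17 {α : Type*} [DecidableEq α] (f : α → ℝ) (A B : Finset α) (c : ℝ) (hc : 0 ≤ c)
    (hcard : A.card ≤ B.card)
    (hA : ∀ a ∈ A \ B, f a ≤ c) (hB : ∀ b ∈ B \ A, c ≤ f b) :
    ∑ a ∈ A, f a ≤ ∑ b ∈ B, f b := by
  have h1 : ∑ a ∈ A \ B, f a ≤ (A \ B).card • c := Finset.sum_le_card_nsmul _ _ _ hA
  have h2 : (B \ A).card • c ≤ ∑ b ∈ B \ A, f b := Finset.card_nsmul_le_sum _ _ _ hB
  have e1 := Finset.card_inter_add_card_sdiff A B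
  have e2 := Finset.card_inter_add_card_sdiff B A
  rw [Finset.inter_comm] at e2
  have hcc : (A \ B).card ≤ (B \ A).card := by omega
  have h3 : ((A \ B).card : ℝ) * c ≤ ((B \ A).card : ℝ) * c :=
    mul_le_mul_of_nonneg_right (Nat.cast_le.mpr hcc) hc
  have s1 := Finset.sum_inter_add_sum_sdiff A B f
  have s2 := Finset.sum_inter_add_sum_sdiff B A f
  rw [Finset.inter_comm] at s2
  simp only [nsmul_eq_mul] at h1 h2
  linarith

lemma cardJ (L m : ℕ) (h : m ≤ L) :
    (Finset.univ.filter (fun j : Fin L => (j : ℕ) < m)).card = m := by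
  have : (Finset.univ.filter (fun j : Fin L => (j : ℕ) < m)) =
      (Finset.range m).attachFin (fun x hx => lt_of_lt_of_le (Finset.mem_range.mp hx) h) := by
    ext j; simp [Finset.mem_attachFin]
  rw [this, Finset.card_attachFin, Finset.card_range]

lemma reindex17 (L : ℕ) (σ : Equiv.Perm (Fin L)) (f : Fin L → ℝ) (m : ℕ) :
    ∑ l ∈ Finset.univ.filter (fun l => (σ.symm l : ℕ) < m), f l
      = ∑ j ∈ Finset.univ.filter (fun j : Fin L => (j : ℕ) < m), f (σ j) :=
  (Finset.sum_equiv σ (by simp) (fun _ _ => rfl)).symm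


/-- over the intersection class F_β(x) ∩ {‖g‖₀ ≤ K}, the conditional
false-negative risk is minimized by the top-K⋆(x) rule with
`K⋆ = min(K, max{m ∈ [L] : ∑_{l=1}^m (1 − η^{σ_l}) ≤ β})`. -/
theorem stmt17 (L β K : ℕ) (hβ1 : 1 ≤ β) (hβL : β ≤ L) (hK1 : 1 ≤ K) (hKL : K ≤ L)
    (η : Fin L → ℝ) (hη : ∀ l, 0 ≤ η l ∧ η l ≤ 1)
    (σ : Equiv.Perm (Fin L)) (hσ : ∀ i j : Fin L, i ≤ j → η (σ j) ≤ η (σ i))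
    -- Kb = max{m ∈ [L] : ∑_{j<m} (1 − η(σ_j)) ≤ β}
    (Kb : ℕ) (hKbL : Kb ≤ L)
    (hKbfeas : ∑ j ∈ Finset.univ.filter (fun j : Fin L => (j : ℕ) < Kb), (1 - η (σ j)) ≤ (β : ℝ))
    (hKbmax : ∀ m, m ≤ L →
      (∑ j ∈ Finset.univ.filter (fun j : Fin L => (j : ℕ) < m), (1 - η (σ j))) ≤ (β : ℝ) →
      m ≤ Kb)
    (Ks : ℕ) (hKs : Ks = min K Kb)
    (gstar : Fin L → Bool) (hgstar : ∀ l, gstar l = decide ((σ.symm l : ℕ) < Ks)) :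
    ((∑ l, (if gstar l = true then 1 - η l else 0)) ≤ (β : ℝ) ∧
      (Finset.univ.filter (fun l => gstar l = true)).card ≤ K) ∧
    ∀ g : Fin L → Bool,
      (∑ l, (if g l = true then 1 - η l else 0)) ≤ (β : ℝ) →
      (Finset.univ.filter (fun l => g l = true)).card ≤ K →
      (∑ l, (if gstar l = false then η l else 0)) ≤ ∑ l, (if g l = false then η l else 0) := by
  have hL1 : 1 ≤ L := le_trans hβ1 hβL
  have hKsK : Ks ≤ K := by omega
  have hKsKb : Ks ≤ Kb := by omega
  have hKsL : Ks ≤ L := le_trans hKsKb hKbL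
  -- Kb ≥ 1
  have hKb1 : 1 ≤ Kb := by
    apply hKbmax 1 hL1
    have h1 : ∑ j ∈ Finset.univ.filter (fun j : Fin L => (j : ℕ) < 1), (1 - η (σ j))
        ≤ (Finset.univ.filter (fun j : Fin L => (j : ℕ) < 1)).card • (1 : ℝ) :=
      Finset.sum_le_card_nsmul _ _ _ (fun j _ => by linarith [(hη (σ j)).1])
    rw [cardJ L 1 hL1] at h1
    simp only [one_smul] at h1
    calc _ ≤ (1:ℝ) := h1
      _ ≤ (β : ℝ) := by exact_mod_cast hβ1
  have hKs1 : 1 ≤ Ks := by omega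
  -- the filter set of gstar
  have hTs : Finset.univ.filter (fun l => gstar l = true)
      = Finset.univ.filter (fun l : Fin L => (σ.symm l : ℕ) < Ks) := by
    ext l; simp [hgstar]
  have hsum_if : ∀ (g : Fin L → Bool) (f : Fin L → ℝ),
      ∑ l, (if g l = true then f l else 0)
        = ∑ l ∈ Finset.univ.filter (fun l => g l = true), f l :=
    fun g f => (Finset.sum_filter _ _).symm
  have hcardTs : (Finset.univ.filter (fun l => gstar l = true)).card = Ks := by
    have hce : (Finset.univ.filter (fun l : Fin L => (σ.symm l : ℕ) < Ks)).card
        = (Finset.univ.filter (fun j : Fin L => (j : ℕ) < Ks)).card :=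
      (Finset.card_equiv σ (by simp)).symm
    rw [hTs, hce, cardJ L Ks hKsL]
  constructor
  · constructor
    · rw [hsum_if, hTs, reindex17]
      refine le_trans ?_ hKbfeas
      apply Finset.sum_le_sum_of_subset_of_nonneg
      · intro j hj; simp only [Finset.mem_filter, Finset.mem_univ, true_and] at *; omega
      · intro j _ _; linarith [(hη (σ j)).2]
    · rw [hcardTs]; exact hKsK
  · intro g hgfeas hgcard
    set S : Finset (Fin L) := Finset.univ.filter (fun l => g l = true) with hS
    set S' : Finset (Fin L) := Finset.univ.filter (fun j : Fin L => g (σ j) = true) with hS'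
    have hcardSS' : S.card = S'.card := Finset.card_equiv σ.symm (by simp [hS, hS'])
    set m := S.card with hm
    have hmL : m ≤ L := le_trans (Finset.card_le_univ S) (by simp)
    have hSsum : ∀ f : Fin L → ℝ, ∑ j ∈ S', f (σ j) = ∑ l ∈ S, f l :=
      fun f => Finset.sum_equiv σ (by simp [hS, hS']) (fun _ _ => rfl)
    -- m ≤ Kb
    have hmKb : m ≤ Kb := by
      apply hKbmax m hmL
      have step : ∑ j ∈ Finset.univ.filter (fun j : Fin L => (j : ℕ) < m), (1 - η (σ j))
          ≤ ∑ j ∈ S', (1 - η (σ j)) := by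
        rcases Nat.eq_zero_or_pos m with hm0 | hm1
        · rw [hm0]
          have : Finset.univ.filter (fun j : Fin L => (j : ℕ) < 0) = ∅ := by
            ext j; simp
          rw [this, Finset.sum_empty]
          exact Finset.sum_nonneg (fun j _ => by linarith [(hη (σ j)).2])
        · have hmlt : m - 1 < L := by omega
          refine key17 _ _ _ (1 - η (σ ⟨m - 1, hmlt⟩)) (by linarith [(hη (σ ⟨m-1,hmlt⟩)).2]) ?_ ?_ ?_
          · rw [cardJ L m hmL]; omega
          · intro a ha
            simp only [Finset.mem_sdiff, Finset.mem_filter, Finset.mem_univ, true_and] at ha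
            have : a ≤ (⟨m - 1, hmlt⟩ : Fin L) := by
              rw [Fin.le_def]; simp; omega
            linarith [hσ a ⟨m-1,hmlt⟩ this]
          · intro b hb
            simp only [Finset.mem_sdiff, Finset.mem_filter, Finset.mem_univ, true_and, hS'] at hb
            have hbm : ¬ ((b : ℕ) < m) := hb.2
            have : (⟨m - 1, hmlt⟩ : Fin L) ≤ b := by
              rw [Fin.le_def]; simp; omega
            linarith [hσ ⟨m-1,hmlt⟩ b this]
      calc _ ≤ ∑ j ∈ S', (1 - η (σ j)) := step
        _ = ∑ l ∈ S, (1 - η l) := hSsum (fun l => 1 - η l)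
        _ = ∑ l, (if g l = true then 1 - η l else 0) := (hsum_if g _).symm
        _ ≤ (β : ℝ) := hgfeas
    have hmKs : m ≤ Ks := by omega
    -- η comparison
    have hKslt : Ks - 1 < L := by omega
    have key2 : ∑ j ∈ S', η (σ j)
        ≤ ∑ j ∈ Finset.univ.filter (fun j : Fin L => (j : ℕ) < Ks), η (σ j) := by
      refine key17 _ _ _ (η (σ ⟨Ks - 1, hKslt⟩)) (hη _).1 ?_ ?_ ?_
      · rw [cardJ L Ks hKsL, ← hcardSS']; exact hmKs
      · intro a ha
        simp only [Finset.mem_sdiff, Finset.mem_filter, Finset.mem_univ, true_and] at ha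
        have : (⟨Ks - 1, hKslt⟩ : Fin L) ≤ a := by
          rw [Fin.le_def]; simp; omega
        exact hσ ⟨Ks-1,hKslt⟩ a this
      · intro b hb
        simp only [Finset.mem_sdiff, Finset.mem_filter, Finset.mem_univ, true_and] at hb
        have : b ≤ (⟨Ks - 1, hKslt⟩ : Fin L) := by
          rw [Fin.le_def]; simp; omega
        exact hσ b ⟨Ks-1,hKslt⟩ this
    have hmain : ∑ l ∈ S, η l ≤ ∑ l ∈ Finset.univ.filter (fun l => gstar l = true), η l := by
      rw [hTs, reindex17, ← hSsum η]
      exact key2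
    -- convert FN sums
    have hsplit : ∀ gg : Fin L → Bool,
        ∑ l, (if gg l = false then η l else 0)
          = (∑ l, η l) - ∑ l ∈ Finset.univ.filter (fun l => gg l = true), η l := by
      intro gg
      rw [← hsum_if gg]
      rw [← Finset.sum_sub_distrib]
      apply Finset.sum_congr rfl
      intro l _
      cases h : gg l <;> simp
    rw [hsplit g, hsplit gstar]
    linarith
end
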